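/- Let 3 ≤ k ≤ n, α > 0 and N₀ > 0. There exists a constant c₀ > 0 depending only on n, k, α and N₀ such that every λ ∈ Γ_{k−1} with σ_k(λ) + α σ_{k−1}(λ) ≥ N₀ satisfies Σ_{i=1}^n S_k^{ii}(λ) = (n−k+1)σ_{k−1}(λ) + α(n−k+2)σ_{k−2}(λ) ≥ c₀ · σ₁(λ)^{1/(k−2)}. -/

import Mathlib

open scoped BigOperators
set_option maxHeartbeats 1000000

noncomputable section

/-- The `j`-th elementary symmetric function of the entries of `lam` indexed by `T`
(`j : ℤ`, with value `0` for `j < 0`). -/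
def sigmaOn {n : ℕ} (T : Finset (Fin n)) (j : ℤ) (lam : Fin n → ℝ) : ℝ :=
  if 0 ≤ j then ∑ s ∈ T.powersetCard j.toNat, ∏ i ∈ s, lam i else 0

/-- The `j`-th elementary symmetric polynomial `σ_j(λ)`. -/
def esymmR {n : ℕ} (j : ℤ) (lam : Fin n → ℝ) : ℝ := sigmaOn Finset.univ j lam

/-- The Garding cone `Γ_k`. -/
def GammaCone (n k : ℕ) : Set (Fin n → ℝ) :=
  {lam | ∀ i : ℕ, 1 ≤ i → i ≤ k → 0 < esymmR (i : ℤ) lam}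

/-- `S_j(λ) = σ_j(λ) + α σ_{j-1}(λ)`. -/
def Sfun {n : ℕ} (α : ℝ) (j : ℤ) (lam : Fin n → ℝ) : ℝ :=
  esymmR j lam + α * esymmR (j - 1) lam

/-- The cone `Γ̃_k = Γ_{k-1} ∩ {λ : S_k(λ) > 0}`. -/
def GammaTilde (n k : ℕ) (α : ℝ) : Set (Fin n → ℝ) :=
  GammaCone n (k - 1) ∩ {lam | 0 < Sfun α (k : ℤ) lam}

/-- `S_k^{pp}(λ) = σ_{k-1}(λ|p) + α σ_{k-2}(λ|p)`, where `(λ|p)` deletes the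
`p`-th entry of `λ`. -/
def SD {n : ℕ} (α : ℝ) (k : ℤ) (lam : Fin n → ℝ) (p : Fin n) : ℝ :=
  sigmaOn (Finset.univ.erase p) (k - 1) lam + α * sigmaOn (Finset.univ.erase p) (k - 2) lam

/-- `S_k^{pp,qq}(λ) = σ_{k-2}(λ|pq) + α σ_{k-3}(λ|pq)` for `p ≠ q`, where `(λ|pq)`
deletes the `p`-th and `q`-th entries of `λ`. -/
def SDD {n : ℕ} (α : ℝ) (k : ℤ) (lam : Fin n → ℝ) (p q : Fin n) : ℝ :=
  sigmaOn ((Finset.univ.erase p).erase q) (k - 2) lam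
    + α * sigmaOn ((Finset.univ.erase p).erase q) (k - 3) lam


private lemma sum_compl_powersetCard {n m : ℕ} (hm : m ≤ n) (g : Finset (Fin n) → ℝ) :
    ∑ T ∈ Finset.univ.powersetCard (n - m), g T
      = ∑ U ∈ Finset.univ.powersetCard m, g Uᶜ := by
  refine Finset.sum_nbij' (fun T => Tᶜ) (fun U => Uᶜ) ?_ ?_ ?_ ?_ ?_
  · intro T hT
    rw [Finset.mem_powersetCard_univ] at hT ⊢
    rw [Finset.card_compl, hT, Fintype.card_fin]
    omega
  · intro U hU
    rw [Finset.mem_powersetCard_univ] at hU ⊢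
    rw [Finset.card_compl, hU, Fintype.card_fin]
  · intro T _; exact compl_compl T
  · intro U _; exact compl_compl U
  · intro T _; rw [compl_compl]

private lemma sum_powersetCard_one' {ι : Type*} [DecidableEq ι] (V : Finset ι) (g : Finset ι → ℝ) :
    ∑ U ∈ V.powersetCard 1, g U = ∑ p ∈ V, g {p} := by
  rw [Finset.powersetCard_one, Finset.sum_map]
  rfl

private lemma sum_powersetCard_two {ι : Type*} [DecidableEq ι] (T : Finset ι) (a : ι → ℝ) :
    2 * ∑ U ∈ T.powersetCard 2, ∏ i ∈ U, a i
      = (∑ i ∈ T, a i) ^ 2 - ∑ i ∈ T, (a i) ^ 2 := by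
  classical
  induction T using Finset.induction_on with
  | empty =>
    have h0 : Finset.powersetCard 2 (∅ : Finset ι) = ∅ := by
      ext U
      simp only [Finset.mem_powersetCard, Finset.subset_empty, Finset.notMem_empty, iff_false,
        not_and]
      rintro rfl
      simp
    simp [h0]
  | @insert x V hx IH =>
    have hsplit := Finset.powersetCard_succ_insert hx 1
    have hdisj : Disjoint (Finset.powersetCard 2 V)
        (Finset.image (insert x) (Finset.powersetCard 1 V)) := by
      rw [Finset.disjoint_left]
      intro U hU hU'
      obtain ⟨W, hW, rfl⟩ := Finset.mem_image.1 hU'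
      have := (Finset.mem_powersetCard.1 hU).1
      exact hx (this (Finset.mem_insert_self x W))
    have hinj : Set.InjOn (insert x) (Finset.powersetCard 1 V : Set (Finset ι)) := by
      intro W1 h1 W2 h2 he
      have hx1 : x ∉ W1 := fun hc => hx ((Finset.mem_powersetCard.1 h1).1 hc)
      have hx2 : x ∉ W2 := fun hc => hx ((Finset.mem_powersetCard.1 h2).1 hc)
      rw [← Finset.erase_insert hx1, ← Finset.erase_insert hx2, he]
    rw [hsplit, Finset.sum_union hdisj, Finset.sum_image hinj]
    have himg : ∑ W ∈ Finset.powersetCard 1 V, ∏ i ∈ insert x W, a i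
        = a x * ∑ i ∈ V, a i := by
      rw [Finset.mul_sum, sum_powersetCard_one' V (fun U => ∏ i ∈ insert x U, a i)]
      refine Finset.sum_congr rfl fun y hy => ?_
      have hxy : x ∉ ({y} : Finset ι) := by
        simp only [Finset.mem_singleton]
        rintro rfl; exact hx hy
      rw [Finset.prod_insert hxy, Finset.prod_singleton]
    rw [himg, Finset.sum_insert hx, Finset.sum_insert hx]
    ring_nf
    ring_nf at IH
    linarith [IH]

private lemma newton_base {N : ℕ} (hN : 2 ≤ N) (f : Fin N → ℝ) :
    (Multiset.map f Finset.univ.val).esymm N * (Multiset.map f Finset.univ.val).esymm (N-2)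
        * ((N.choose (N-1) : ℝ))^2
      ≤ (Multiset.map f Finset.univ.val).esymm (N-1) ^ 2
          * (N.choose N : ℝ) * (N.choose (N-2) : ℝ) := by
  classical
  have hEdef : ∀ m, (Multiset.map f Finset.univ.val).esymm m
      = ∑ T ∈ Finset.univ.powersetCard m, ∏ i ∈ T, f i :=
    fun m => Finset.esymm_map_val f Finset.univ m
  set a : Fin N → ℝ := fun p => ∏ i ∈ Finset.univ.erase p, f i with ha
  set S := ∑ p : Fin N, a p with hS
  set Q := ∑ p : Fin N, (a p)^2 with hQ
  have hpcself : Finset.univ.powersetCard N = {(Finset.univ : Finset (Fin N))} := by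
    have := Finset.powersetCard_self (Finset.univ : Finset (Fin N))
    rwa [Finset.card_univ, Fintype.card_fin] at this
  have hEN : (Multiset.map f Finset.univ.val).esymm N = ∏ i, f i := by
    rw [hEdef, hpcself, Finset.sum_singleton]
  have hEN1 : (Multiset.map f Finset.univ.val).esymm (N-1) = S := by
    rw [hEdef, sum_compl_powersetCard (show 1 ≤ N by omega),
      sum_powersetCard_one' Finset.univ (fun U => ∏ i ∈ Uᶜ, f i)]
    refine Finset.sum_congr rfl fun p _ => ?_
    rw [Finset.compl_singleton]
  -- pair identity
  have hpair : ∀ U ∈ Finset.univ.powersetCard 2,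
      ∏ i ∈ U, a i = (∏ i, f i) * ∏ i ∈ Uᶜ, f i := by
    intro U hU
    obtain ⟨p, q, hpq, rfl⟩ := Finset.card_eq_two.1 (Finset.mem_powersetCard_univ.1 hU)
    have hq : q ∈ Finset.univ.erase p := Finset.mem_erase.2 ⟨hpq.symm, Finset.mem_univ q⟩
    have hp : p ∈ Finset.univ.erase q := Finset.mem_erase.2 ⟨hpq, Finset.mem_univ p⟩
    have hWc : ({p, q} : Finset (Fin N))ᶜ = (Finset.univ.erase p).erase q := by
      ext x
      simp only [Finset.mem_compl, Finset.mem_insert, Finset.mem_singleton, Finset.mem_erase,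
        Finset.mem_univ, and_true]
      tauto
    have hap : a p = f q * ∏ i ∈ (Finset.univ.erase p).erase q, f i :=
      (Finset.mul_prod_erase _ f hq).symm
    have haq : a q = f p * ∏ i ∈ (Finset.univ.erase p).erase q, f i := by
      have h := (Finset.mul_prod_erase (Finset.univ.erase q) f hp).symm
      rw [Finset.erase_right_comm] at h
      exact h
    have hfull : ∏ i, f i = f p * (f q * ∏ i ∈ (Finset.univ.erase p).erase q, f i) := by
      rw [← hap, ha]
      exact (Finset.mul_prod_erase Finset.univ f (Finset.mem_univ p)).symm
    rw [Finset.prod_pair hpq, hWc, hap, haq, hfull]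
    ring
  have hEN2 : 2 * ((Multiset.map f Finset.univ.val).esymm N
      * (Multiset.map f Finset.univ.val).esymm (N-2)) = S^2 - Q := by
    rw [hEN, hEdef, sum_compl_powersetCard (show 2 ≤ N from hN), hS, hQ,
      ← sum_powersetCard_two Finset.univ a]
    congr 1
    rw [Finset.mul_sum]
    exact Finset.sum_congr rfl fun U hU => (hpair U hU).symm
  -- Cauchy-Schwarz
  have hCS : S^2 ≤ (N:ℝ) * Q := by
    have := sq_sum_le_card_mul_sum_sq (s := (Finset.univ : Finset (Fin N))) (f := a)
    simpa [Finset.card_univ] using this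
  -- choose values
  have hc1 : (N.choose (N-1) : ℝ) = (N:ℝ) := by
    have h1 := Nat.choose_symm (show N-1 ≤ N by omega)
    have h2 : N - (N-1) = 1 := by omega
    rw [h2, Nat.choose_one_right] at h1
    exact_mod_cast h1.symm
  have hcN : (N.choose N : ℝ) = 1 := by rw [Nat.choose_self]; norm_num
  have hc2 : 2 * (N.choose (N-2) : ℝ) = (N:ℝ) * ((N:ℝ) - 1) := by
    have h1 : N - (N-2) = 2 := by omega
    have h3 := Nat.choose_symm (show N - 2 ≤ N by omega)
    rw [h1] at h3
    have h2 := Nat.choose_succ_right_eq N 1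
    rw [Nat.choose_one_right] at h2
    have : (N.choose (N-2)) * 2 = N * (N-1) := by rw [← h3, h2]
    have hcast := congrArg (Nat.cast : ℕ → ℝ) this
    push_cast [Nat.cast_sub (show 1 ≤ N by omega)] at hcast
    linarith
  rw [hEN1, hc1, hcN]
  nlinarith [hEN2, hCS, sq_nonneg S, hN, show (2:ℝ) ≤ (N:ℝ) by exact_mod_cast hN,
    mul_le_mul_of_nonneg_left hCS (show (0:ℝ) ≤ (N:ℝ) by positivity)]

open Polynomial

private lemma deriv_esymm (s : Multiset ℝ) (hn : 1 ≤ Multiset.card s) :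
    ∃ t : Multiset ℝ, Multiset.card t = Multiset.card s - 1 ∧
      ∀ j : ℕ, j ≤ Multiset.card s - 1 →
        (Multiset.card s : ℝ) * t.esymm j
          = ((Multiset.card s - j : ℕ) : ℝ) * s.esymm j := by
  classical
  set n := Multiset.card s with hns
  set p : ℝ[X] := (s.map fun a => X - C a).prod with hp
  have hdeg : p.natDegree = n := natDegree_multiset_prod_X_sub_C_eq_card s
  have hroots : p.roots = s := roots_multiset_prod_X_sub_C s
  have hcoefftop : p.coeff n = 1 := by
    have h := Multiset.prod_X_sub_C_coeff s (le_refl n)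
    rw [← hns, Nat.sub_self] at h
    simpa [Multiset.esymm, hp] using h
  have hc1 : (derivative p).coeff (n-1) = (n : ℝ) := by
    have h := coeff_derivative p (n-1)
    rw [Nat.sub_add_cancel hn] at h
    rw [h, hcoefftop, one_mul]
    push_cast [Nat.cast_sub hn]
    ring
  have hnne : ((n : ℝ)) ≠ 0 := by positivity
  have hpne : derivative p ≠ 0 := by
    intro hcontra
    rw [hcontra] at hc1
    simp at hc1
    exact hnne hc1.symm
  have hdeg' : (derivative p).natDegree ≤ n - 1 := by
    have := natDegree_derivative_le p
    rwa [hdeg] at this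
  have hcardroots : Multiset.card p.roots = n := by rw [hroots]
  have hcard_le : n ≤ Multiset.card (derivative p).roots + 1 := by
    have := card_roots_le_derivative p
    rwa [hcardroots] at this
  have hcard_le' : Multiset.card (derivative p).roots ≤ n - 1 :=
    le_trans (card_roots' _) hdeg'
  have hcardeq : Multiset.card (derivative p).roots = n - 1 := by omega
  have hdegeq : (derivative p).natDegree = n - 1 := by
    have := card_roots' (derivative p)
    omega
  have hld : (derivative p).leadingCoeff = (n : ℝ) := by
    rw [Polynomial.leadingCoeff, hdegeq, hc1]
  refine ⟨(derivative p).roots, hcardeq, fun j hj => ?_⟩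
  have hkey1 : (derivative p).coeff ((n-1) - j)
      = (n : ℝ) * ((-1:ℝ))^j * (derivative p).roots.esymm j := by
    have h := coeff_eq_esymm_roots_of_card (hcardeq.trans hdegeq.symm)
      (show (n-1) - j ≤ (derivative p).natDegree by rw [hdegeq]; omega)
    rw [h, hld, hdegeq, Nat.sub_sub_self hj]
  have hkey2 : (derivative p).coeff ((n-1) - j) = p.coeff (n - j) * ((n - j : ℕ) : ℝ) := by
    have h := coeff_derivative p ((n-1) - j)
    have he : (n-1) - j + 1 = n - j := by omega
    rw [he] at h
    rw [h]
    congr 1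
    have : ((n - 1 - j : ℕ) : ℝ) + 1 = ((n - j : ℕ) : ℝ) := by
      have h2 : (n-1) - j + 1 = n - j := by omega
      exact_mod_cast congrArg (Nat.cast (R := ℝ)) h2
    rw [← this]
  have hkey3 : p.coeff (n - j) = ((-1:ℝ))^j * s.esymm j := by
    have h := Multiset.prod_X_sub_C_coeff s (show n - j ≤ Multiset.card s by omega)
    rw [← hns] at h
    rw [← hp] at h
    rw [h, Nat.sub_sub_self (show j ≤ n by omega)]
  have hpm : ((-1:ℝ))^j ≠ 0 := by
    apply pow_ne_zero; norm_num
  apply mul_left_cancel₀ hpm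
  have : (n : ℝ) * ((-1:ℝ))^j * (derivative p).roots.esymm j
      = ((-1:ℝ))^j * s.esymm j * ((n - j : ℕ) : ℝ) := by
    rw [← hkey1, hkey2, hkey3]
  linear_combination this

private lemma nat_choose_del (n j : ℕ) (h : 1 ≤ n) :
    (n - j) * n.choose j = n * (n-1).choose j := by
  obtain ⟨m, rfl⟩ : ∃ m, n = m + 1 := ⟨n-1, by omega⟩
  have h1 := Nat.choose_succ_right_eq (m+1) j
  have h2 := Nat.add_one_mul_choose_eq m j
  simp only [Nat.succ_eq_add_one, Nat.add_sub_cancel] at h2 ⊢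
  rw [h2, h1, Nat.mul_comm]

private lemma newton_ineq : ∀ (n : ℕ) (s : Multiset ℝ), Multiset.card s = n →
    ∀ (j : ℕ), 1 ≤ j → j + 1 ≤ n →
    s.esymm (j+1) * s.esymm (j-1) * ((n.choose j : ℕ) : ℝ)^2
      ≤ s.esymm j ^ 2 * ((n.choose (j+1) : ℕ) : ℝ) * ((n.choose (j-1) : ℕ) : ℝ) := by
  intro n
  induction n using Nat.strong_induction_on with
  | _ n IH =>
    intro s hcard j hj1 hj2
    rcases eq_or_lt_of_le hj2 with heq | hlt
    · -- base case : j + 1 = n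
      subst hcard
      have hlen : s.toList.length = Multiset.card s := Multiset.length_toList s
      have hs' : s = Multiset.map s.toList.get Finset.univ.val := by
        rw [Fin.univ_val_map, List.ofFn_get, Multiset.coe_toList]
      have hbase := newton_base (N := s.toList.length)
        (by omega) s.toList.get
      rw [← hs', hlen, ← heq] at hbase
      have e1 : j + 1 - 1 = j := by omega
      have e2 : j + 1 - 2 = j - 1 := by omega
      rw [e1, e2] at hbase
      rw [← heq]
      exact hbase
    · -- inductive step
      obtain ⟨t, htcard, ht⟩ := deriv_esymm s (by omega)
      rw [hcard] at htcard ht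
      have hm : n - 1 < n := by omega
      have IH' := IH (n-1) hm t htcard j hj1 (by omega)
      have h1 := ht (j+1) (by omega)
      have h2 := ht (j-1) (by omega)
      have h3 := ht j (by omega)
      have hApos : (0:ℝ) < ((n - (j+1) : ℕ) : ℝ) := by
        exact_mod_cast Nat.sub_pos_of_lt hlt
      have hB2pos : (0:ℝ) < ((n - (j-1) : ℕ) : ℝ) := by
        have : j - 1 < n := by omega
        exact_mod_cast Nat.sub_pos_of_lt this
      have hDpos : (0:ℝ) < ((n - j : ℕ) : ℝ) := by
        have : j < n := by omega
        exact_mod_cast Nat.sub_pos_of_lt this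
      have hchoose : ∀ i : ℕ, ((n - i : ℕ) : ℝ) * ((n.choose i : ℕ) : ℝ)
          = (n : ℝ) * (((n-1).choose i : ℕ) : ℝ) := by
        intro i
        exact_mod_cast congrArg (Nat.cast (R := ℝ)) (nat_choose_del n i (by omega))
      have hCj := hchoose j
      have hCj1 := hchoose (j+1)
      have hCjm := hchoose (j-1)
      have H2 := mul_le_mul_of_nonneg_left IH'
        (show (0:ℝ) ≤ (n:ℝ)^4 by positivity)
      have EL : (n:ℝ)^4 * (t.esymm (j+1) * t.esymm (j-1) * (((n-1).choose j : ℕ) : ℝ)^2)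
          = (((n - (j+1) : ℕ) : ℝ) * ((n - (j-1) : ℕ) : ℝ) * ((n - j : ℕ) : ℝ)^2)
            * (s.esymm (j+1) * s.esymm (j-1) * ((n.choose j : ℕ) : ℝ)^2) := by
        linear_combination ((n:ℝ)^3 * t.esymm (j-1) * (((n-1).choose j : ℕ):ℝ)^2) * h1
          + (((n - (j+1) : ℕ) : ℝ) * s.esymm (j+1) * (n:ℝ)^2 * (((n-1).choose j : ℕ):ℝ)^2) * h2
          - (((n - (j+1) : ℕ) : ℝ) * s.esymm (j+1) * ((n - (j-1) : ℕ) : ℝ) * s.esymm (j-1)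
              * ((n:ℝ) * (((n-1).choose j : ℕ):ℝ) + ((n - j : ℕ) : ℝ) * ((n.choose j : ℕ):ℝ))) * hCj
      have ER : (n:ℝ)^4 * (t.esymm j ^ 2 * (((n-1).choose (j+1) : ℕ) : ℝ)
            * (((n-1).choose (j-1) : ℕ) : ℝ))
          = (((n - (j+1) : ℕ) : ℝ) * ((n - (j-1) : ℕ) : ℝ) * ((n - j : ℕ) : ℝ)^2)
            * (s.esymm j ^ 2 * ((n.choose (j+1) : ℕ) : ℝ) * ((n.choose (j-1) : ℕ) : ℝ)) := by
        linear_combination (((n:ℝ) * t.esymm j + ((n - j : ℕ) : ℝ) * s.esymm j) * (n:ℝ)^2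
            * (((n-1).choose (j+1) : ℕ):ℝ) * (((n-1).choose (j-1) : ℕ):ℝ)) * h3
          - (((n - j : ℕ) : ℝ)^2 * s.esymm j ^2 * (n:ℝ) * (((n-1).choose (j-1) : ℕ):ℝ)) * hCj1
          - (((n - j : ℕ) : ℝ)^2 * s.esymm j ^2 * ((n - (j+1) : ℕ) : ℝ)
              * ((n.choose (j+1) : ℕ):ℝ)) * hCjm
      rw [EL, ER] at H2
      exact le_of_mul_le_mul_left H2 (by positivity)


private lemma chain_lemma (E : ℕ → ℝ) (B : ℝ) (K : ℕ) (hB : 1 ≤ B)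
    (hpos : ∀ m, m ≤ K → 0 < E m)
    (hnewton : ∀ j, 1 ≤ j → j + 1 ≤ K → E (j+1) * E (j-1) ≤ B * E j ^ 2) :
    ∀ d i, 1 ≤ i → i + d ≤ K → E (i+d) * E (i-1) ≤ B^d * E i * E (i+d-1) := by
  intro d
  induction d with
  | zero =>
    intro i h1 h2
    simp only [Nat.add_zero, pow_zero, one_mul]
    exact le_refl _
  | succ d IH =>
    intro i h1 h2
    have hIH := IH i h1 (by omega)
    have hnew := hnewton (i+d) (by omega) (by omega)
    have hpos1 : 0 < E (i+d-1) := hpos _ (by omega)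
    have hpos2 : (0:ℝ) ≤ E (i-1) := le_of_lt (hpos _ (by omega))
    have hEid : 0 < E (i+d) := hpos _ (by omega)
    have t1 : E (i+d+1) * E (i+d-1) * E (i-1) ≤ B * E (i+d)^2 * E (i-1) :=
      mul_le_mul_of_nonneg_right hnew hpos2
    have t2 : (B * E (i+d)) * (E (i+d) * E (i-1)) ≤ (B * E (i+d)) * (B^d * E i * E (i+d-1)) :=
      mul_le_mul_of_nonneg_left hIH (by positivity)
    have t2' : B * E (i+d) * (B^d * E i * E (i+d-1))
        = (B^(d+1) * E i * E (i+d)) * E (i+d-1) := by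
      rw [pow_succ]; ring
    have t3 : E (i+d+1) * E (i-1) * E (i+d-1) ≤ (B^(d+1) * E i * E (i+d)) * E (i+d-1) := by
      nlinarith [t1, t2, t2']
    have t4 := le_of_mul_le_mul_right t3 hpos1
    have he : i + (d+1) = (i+d)+1 := by omega
    have he2 : i + (d+1) - 1 = i + d := by omega
    rw [he2, he]
    exact t4

private lemma chainQ (E : ℕ → ℝ) (B : ℝ) (K : ℕ) (hB : 1 ≤ B) (hK : 2 ≤ K)
    (hpos : ∀ m, m ≤ K → 0 < E m)
    (hnewton : ∀ j, 1 ≤ j → j + 1 ≤ K → E (j+1) * E (j-1) ≤ B * E j ^ 2) :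
    ∀ m, 1 ≤ m → m ≤ K - 1 →
      E K ^ (m-1) * E 1 ≤ B^((K+1)*(m-1)) * E m * E (K-1) ^ (m-1) := by
  intro m
  induction m with
  | zero => omega
  | succ m IH =>
    intro _ hm
    rcases Nat.eq_zero_or_pos m with rfl | hm1
    · simp only [Nat.add_sub_cancel, pow_zero, one_mul, Nat.mul_zero, mul_one]
      have : 0 < E 1 := hpos 1 (by omega)
      linarith
    · have hIH := IH (by omega) (by omega)
      have hEK := hpos K le_rfl
      have hEm1 := hpos (m+1) (by omega)
      have hEK1 := hpos (K-1) (by omega)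
      have hch : E K * E m ≤ B^(K+1) * E (m+1) * E (K-1) := by
        have h := chain_lemma E B K hB hpos hnewton (K-(m+1)) (m+1) (by omega) (by omega)
        have e1 : (m+1)+(K-(m+1)) = K := by omega
        rw [e1] at h
        have e2 : m + 1 - 1 = m := by omega
        rw [e2] at h
        calc E K * E m ≤ B^(K-(m+1)) * E (m+1) * E (K-1) := h
          _ ≤ B^(K+1) * E (m+1) * E (K-1) := by
              have hpow := pow_le_pow_right₀ hB (show K-(m+1) ≤ K+1 by omega)
              have := mul_le_mul_of_nonneg_right
                (mul_le_mul_of_nonneg_right hpow hEm1.le) hEK1.le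
              exact this
      have hpowK : E K ^ m = E K ^ (m-1) * E K := by
        rw [← pow_succ]
        congr 1
        omega
      have hpowK1 : E (K-1) ^ m = E (K-1) ^ (m-1) * E (K-1) := by
        rw [← pow_succ]
        congr 1
        omega
      have hexp : (K+1)*(m-1) + (K+1) = (K+1)*m := by
        have h : m - 1 + 1 = m := by omega
        calc (K+1)*(m-1) + (K+1) = (K+1)*((m-1)+1) := (Nat.mul_succ _ _).symm
          _ = (K+1)*m := by rw [h]
      have hmul : B^((K+1)*(m-1)) * B^(K+1) = B^((K+1)*m) := by
        rw [← pow_add, hexp]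
      have s1 : E K ^ m * E 1 ≤ (B^((K+1)*(m-1)) * E (K-1)^(m-1)) * (E K * E m) := by
        calc E K ^ m * E 1 = (E K ^ (m-1) * E 1) * E K := by rw [hpowK]; ring
          _ ≤ (B^((K+1)*(m-1)) * E m * E (K-1)^(m-1)) * E K :=
              mul_le_mul_of_nonneg_right hIH hEK.le
          _ = (B^((K+1)*(m-1)) * E (K-1)^(m-1)) * (E K * E m) := by ring
      have s2 : (B^((K+1)*(m-1)) * E (K-1)^(m-1)) * (E K * E m)
          ≤ (B^((K+1)*(m-1)) * E (K-1)^(m-1)) * (B^(K+1) * E (m+1) * E (K-1)) :=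
        mul_le_mul_of_nonneg_left hch (by positivity)
      have s3 : (B^((K+1)*(m-1)) * E (K-1)^(m-1)) * (B^(K+1) * E (m+1) * E (K-1))
          = B^((K+1)*m) * E (m+1) * E (K-1)^m := by
        rw [hpowK1, ← hmul]; ring
      have e3 : m + 1 - 1 = m := by omega
      rw [e3]
      linarith [s1, s2, s3.le, s3.ge]

open Polynomial in
private lemma esymmR_natCast {n : ℕ} (lam : Fin n → ℝ) (j : ℕ) :
    esymmR (j : ℤ) lam = (Multiset.map lam Finset.univ.val).esymm j := by
  unfold esymmR sigmaOn
  rw [if_pos (Int.natCast_nonneg j), Int.toNat_natCast]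
  exact (Finset.esymm_map_val lam Finset.univ j).symm

private lemma sum_sigma_erase {n : ℕ} (lam : Fin n → ℝ) (m : ℕ) :
    ∑ p : Fin n, ∑ T ∈ ((Finset.univ.erase p).powersetCard m), ∏ i ∈ T, lam i
      = ((n - m : ℕ) : ℝ) * ∑ T ∈ Finset.univ.powersetCard m, ∏ i ∈ T, lam i := by
  classical
  have h1 : ∀ p : Fin n, (Finset.univ.erase p).powersetCard m
      = (Finset.univ.powersetCard m).filter (fun T => p ∉ T) := by
    intro p
    ext T
    simp only [Finset.mem_powersetCard, Finset.mem_filter, Finset.subset_erase]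
    tauto
  have h2 : ∑ p : Fin n, ∑ T ∈ ((Finset.univ.erase p).powersetCard m), ∏ i ∈ T, lam i
      = ∑ p : Fin n, ∑ T ∈ Finset.univ.powersetCard m,
          if p ∉ T then ∏ i ∈ T, lam i else 0 := by
    refine Finset.sum_congr rfl fun p _ => ?_
    rw [h1 p, Finset.sum_filter]
  rw [h2, Finset.sum_comm, Finset.mul_sum]
  refine Finset.sum_congr rfl fun T hT => ?_
  rw [← Finset.sum_filter, Finset.sum_const]
  have hc : (Finset.univ.filter (fun p => p ∉ T)).card = n - m := by
    have he : Finset.univ.filter (fun p => p ∉ T) = Tᶜ := by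
      ext x; simp [Finset.mem_compl]
    rw [he, Finset.card_compl, Fintype.card_fin, (Finset.mem_powersetCard_univ.1 hT)]
  rw [hc, nsmul_eq_mul]

/-- **Lower bound for `Σ_i S_k^{ii}`** (Lemma 2.5 (c)): for `3 ≤ k ≤ n` there is
`c₀ > 0` (depending on `n, k, α, N₀`) such that every `λ ∈ Γ_{k-1}` with
`σ_k(λ) + α σ_{k-1}(λ) ≥ N₀` satisfies
`Σ_i S_k^{ii}(λ) = (n-k+1)σ_{k-1}(λ) + α(n-k+2)σ_{k-2}(λ) ≥ c₀ σ₁(λ)^{1/(k-2)}`. -/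
theorem sum_SkD_lower_bound
    {n k : ℕ} (hk : 3 ≤ k) (hkn : k ≤ n) (α N₀ : ℝ) (hα : 0 < α) (hN₀ : 0 < N₀) :
    ∃ c₀ : ℝ, 0 < c₀ ∧
      ∀ lam ∈ GammaCone n (k - 1),
        N₀ ≤ Sfun α (k : ℤ) lam →
        (∑ i, SD α (k : ℤ) lam i)
            = ((n - k + 1 : ℕ) : ℝ) * esymmR ((k : ℤ) - 1) lam
              + α * ((n - k + 2 : ℕ) : ℝ) * esymmR ((k : ℤ) - 2) lam ∧
        c₀ * (esymmR 1 lam) ^ ((1 : ℝ) / ((k : ℝ) - 2)) ≤ ∑ i, SD α (k : ℤ) lam i := by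
  classical
  have hk0 : 0 < k := by omega
  set B : ℝ := ((2:ℝ)^n)^2 with hBdef
  have h2n : (1:ℝ) ≤ (2:ℝ)^n := one_le_pow₀ (by norm_num)
  have hB : (1:ℝ) ≤ B := by nlinarith [h2n]
  have hBpos : (0:ℝ) < B := lt_of_lt_of_le one_pos hB
  set B1 : ℝ := B^(k*k) with hB1def
  have hB1 : (1:ℝ) ≤ B1 := one_le_pow₀ hB
  have hB1pos : (0:ℝ) < B1 := lt_of_lt_of_le one_pos hB1
  set ν : ℝ := N₀ / (B + α) with hνdef
  have hνpos : 0 < ν := div_pos hN₀ (by linarith)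
  set D2 : ℝ := B*B1^4 + α*B1^2 with hD2def
  have hD2pos : 0 < D2 :=
    add_pos (mul_pos hBpos (pow_pos hB1pos 4)) (mul_pos hα (pow_pos hB1pos 2))
  set δ : ℝ := min 1 (Real.sqrt (N₀ / (2*D2))) with hδdef
  have hδpos : 0 < δ := lt_min one_pos (Real.sqrt_pos.2 (div_pos hN₀ (by linarith)))
  have hδ1 : δ ≤ 1 := min_le_left _ _
  set C : ℝ := max (B1 / ν^(k-3)) (B1 / δ^(k-3)) with hCdef
  have hCpos : 0 < C :=
    lt_of_lt_of_le (div_pos hB1pos (pow_pos hνpos _)) (le_max_left _ _)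
  set t : ℝ := (1:ℝ)/((k:ℝ)-2) with htdef
  have hk2 : (0:ℝ) < (k:ℝ) - 2 := by
    have : (3:ℝ) ≤ (k:ℝ) := by exact_mod_cast hk
    linarith
  have htpos : 0 < t := div_pos one_pos hk2
  have hCt : 0 < C ^ t := Real.rpow_pos_of_pos hCpos t
  refine ⟨min 1 α / C^t, div_pos (lt_min one_pos hα) hCt, ?_⟩
  intro lam hlam hcon
  -- bridge to multiset esymm
  set E : ℕ → ℝ := fun j => (Multiset.map lam Finset.univ.val).esymm j with hEdef
  have hbridge : ∀ j : ℕ, esymmR (j:ℤ) lam = E j := fun j => esymmR_natCast lam j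
  have hscard : Multiset.card (Multiset.map lam Finset.univ.val) = n := by
    rw [Multiset.card_map]
    simp
  have hE0 : E 0 = 1 := by
    show (Multiset.map lam Finset.univ.val).esymm 0 = 1
    simp [Multiset.esymm]
  have hEpos : ∀ m, m ≤ k-1 → 0 < E m := by
    intro m hm
    rcases Nat.eq_zero_or_pos m with rfl | h1
    · rw [hE0]; norm_num
    · have h := hlam m h1 hm
      rwa [hbridge m] at h
  have hb : 0 < E (k-1) := hEpos (k-1) le_rfl
  have ha : 0 < E (k-2) := hEpos (k-2) (by omega)
  have he1 : 0 < E 1 := hEpos 1 (by omega)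
  -- simple Newton inequality
  have hcb : ∀ i : ℕ, ((n.choose i : ℕ):ℝ) ≤ (2:ℝ)^n := by
    intro i
    have hnat : n.choose i ≤ 2^n := by
      rcases le_or_gt i n with h | h
      · calc n.choose i ≤ ∑ j ∈ Finset.range (n+1), n.choose j :=
            Finset.single_le_sum (fun j _ => Nat.zero_le _) (Finset.mem_range.2 (by omega))
          _ = 2^n := Nat.sum_range_choose n
      · simp [Nat.choose_eq_zero_of_lt h]
    calc ((n.choose i:ℕ):ℝ) ≤ ((2^n : ℕ):ℝ) := by exact_mod_cast hnat
      _ = (2:ℝ)^n := by push_cast; ring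
  have hnewtonS : ∀ j, 1 ≤ j → j+1 ≤ n → E (j+1) * E (j-1) ≤ B * E j ^ 2 := by
    intro j h1 h2
    have hN : E (j+1) * E (j-1) * ((n.choose j : ℕ) : ℝ)^2
        ≤ E j ^ 2 * ((n.choose (j+1) : ℕ) : ℝ) * ((n.choose (j-1) : ℕ) : ℝ) :=
      newton_ineq n (Multiset.map lam Finset.univ.val) hscard j h1 h2
    rcases le_or_gt 0 (E (j+1) * E (j-1)) with hsgn | hsgn
    · have hc1 : (1:ℝ) ≤ ((n.choose j : ℕ):ℝ) := by
        exact_mod_cast Nat.succ_le_of_lt (Nat.choose_pos (by omega : j ≤ n))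
      have hcsq : (1:ℝ) ≤ ((n.choose j:ℕ):ℝ)^2 := by nlinarith [hc1]
      have step1 : E (j+1) * E (j-1) ≤ E (j+1) * E (j-1) * ((n.choose j:ℕ):ℝ)^2 :=
        le_mul_of_one_le_right hsgn hcsq
      have c1 := hcb (j+1)
      have c2 := hcb (j-1)
      have c1n : (0:ℝ) ≤ ((n.choose (j+1):ℕ):ℝ) := by positivity
      have h2n' : (0:ℝ) ≤ (2:ℝ)^n := by positivity
      have hcc : ((n.choose (j+1):ℕ):ℝ) * ((n.choose (j-1):ℕ):ℝ) ≤ (2:ℝ)^n * (2:ℝ)^n :=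
        mul_le_mul c1 c2 (by positivity) h2n'
      have step2 : E j ^2 * ((n.choose (j+1):ℕ):ℝ) * ((n.choose (j-1):ℕ):ℝ) ≤ B * E j ^2 := by
        have hmm := mul_le_mul_of_nonneg_left hcc (sq_nonneg (E j))
        calc E j ^2 * ((n.choose (j+1):ℕ):ℝ) * ((n.choose (j-1):ℕ):ℝ)
            = E j ^2 * (((n.choose (j+1):ℕ):ℝ) * ((n.choose (j-1):ℕ):ℝ)) := by ring
          _ ≤ E j ^2 * ((2:ℝ)^n * (2:ℝ)^n) := hmm
          _ = B * E j ^2 := by rw [hBdef]; ring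
      exact le_trans (le_trans step1 hN) step2
    · exact le_trans hsgn.le (mul_nonneg hBpos.le (sq_nonneg _))
  have hKnewton : ∀ j, 1 ≤ j → j+1 ≤ k-1 → E (j+1) * E (j-1) ≤ B * E j ^ 2 :=
    fun j h1 h2 => hnewtonS j h1 (by omega)
  -- P1 : b ≤ B1 * e1 * a
  have P1 : E (k-1) ≤ B1 * E 1 * E (k-2) := by
    have h := chain_lemma E B (k-1) hB hEpos hKnewton (k-2) 1 le_rfl (by omega)
    have e1' : 1+(k-2) = k-1 := by omega
    rw [e1'] at h
    have e2' : k-1-1 = k-2 := by omega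
    rw [e2', hE0, mul_one] at h
    have hpow : B^(k-2) ≤ B1 := by
      rw [hB1def]
      exact pow_le_pow_right₀ hB
        (le_trans (by omega : k-2 ≤ k) (Nat.le_mul_of_pos_left k (by omega)))
    calc E (k-1) ≤ B^(k-2) * E 1 * E (k-2) := h
      _ ≤ B1 * E 1 * E (k-2) :=
        mul_le_mul_of_nonneg_right (mul_le_mul_of_nonneg_right hpow he1.le) ha.le
  -- P2 : e1 * b^(k-3) ≤ B1 * a^(k-2)
  have P2 : E 1 * E (k-1)^(k-3) ≤ B1 * E (k-2)^(k-2) := by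
    have h := chainQ E B (k-1) hB (by omega) hEpos hKnewton (k-2) (by omega) (by omega)
    have e1' : (k-2)-1 = k-3 := by omega
    have e2' : (k-1)-1 = k-2 := by omega
    have e3' : (k-1)+1 = k := by omega
    rw [e1', e2', e3'] at h
    have hpw : E (k-2) * E (k-2)^(k-3) = E (k-2)^(k-2) := by
      rw [← pow_succ']
      congr 1
      omega
    have hpow : B^(k*(k-3)) ≤ B1 := by
      rw [hB1def]
      exact pow_le_pow_right₀ hB (Nat.mul_le_mul_left k (by omega))
    calc E 1 * E (k-1)^(k-3) = E (k-1)^(k-3) * E 1 := by ring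
      _ ≤ B^(k*(k-3)) * E (k-2) * E (k-2)^(k-3) := h
      _ = B^(k*(k-3)) * E (k-2)^(k-2) := by rw [mul_assoc, hpw]
      _ ≤ B1 * E (k-2)^(k-2) := mul_le_mul_of_nonneg_right hpow (by positivity)
  -- C1 : N₀ * a ≤ b * (B*b + α*a)
  have hz1 : (k:ℤ) - 1 = ((k-1:ℕ):ℤ) := by omega
  have hz2 : (k:ℤ) - 2 = ((k-2:ℕ):ℤ) := by omega
  have hzk : (k:ℤ) = ((k:ℕ):ℤ) := rfl
  have C1 : N₀ * E (k-2) ≤ E (k-1) * (B * E (k-1) + α * E (k-2)) := by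
    have hNk := hnewtonS (k-1) (by omega) (by omega)
    have e1' : (k-1)+1 = k := by omega
    have e2' : (k-1)-1 = k-2 := by omega
    rw [e1', e2'] at hNk
    have hSf : Sfun α (k:ℤ) lam = E k + α * E (k-1) := by
      unfold Sfun
      rw [hz1, hbridge (k-1), hzk, hbridge k]
    have hcon' : N₀ ≤ E k + α * E (k-1) := by rw [← hSf]; exact hcon
    linarith [mul_le_mul_of_nonneg_right hcon' ha.le, hNk]
  -- key : e1 ≤ C * S^(k-2)
  have hSpos : 0 < E (k-2) + E (k-1) := add_pos ha hb
  have haS : E (k-2) ≤ E (k-2) + E (k-1) := by linarith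
  have hkey : E 1 ≤ C * (E (k-2) + E (k-1))^(k-2) := by
    rcases le_total (E (k-1)) (E (k-2)) with hba | hab
    · -- b ≤ a
      have hν_le_b : ν ≤ E (k-1) := by
        have hbb2 : B * (E (k-1) * E (k-1)) ≤ B * (E (k-2) * E (k-1)) :=
          mul_le_mul_of_nonneg_left (mul_le_mul_of_nonneg_right hba hb.le) hBpos.le
        have h2 : N₀ * E (k-2) ≤ ((B+α) * E (k-1)) * E (k-2) := by linarith [C1, hbb2]
        have h3 : N₀ ≤ (B+α) * E (k-1) := le_of_mul_le_mul_right h2 ha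
        rw [hνdef, div_le_iff₀ (by linarith : (0:ℝ) < B+α)]
        linarith [h3]
      have h4 : E 1 * ν^(k-3) ≤ B1 * (E (k-2) + E (k-1))^(k-2) := by
        calc E 1 * ν^(k-3) ≤ E 1 * E (k-1)^(k-3) :=
              mul_le_mul_of_nonneg_left (pow_le_pow_left₀ hνpos.le hν_le_b _) he1.le
          _ ≤ B1 * E (k-2)^(k-2) := P2
          _ ≤ B1 * (E (k-2) + E (k-1))^(k-2) :=
              mul_le_mul_of_nonneg_left (pow_le_pow_left₀ ha.le haS _) hB1pos.le
      have h5 : E 1 ≤ (B1 / ν^(k-3)) * (E (k-2) + E (k-1))^(k-2) := by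
        rw [div_mul_eq_mul_div, le_div_iff₀ (pow_pos hνpos _)]
        linarith [h4]
      calc E 1 ≤ (B1 / ν^(k-3)) * (E (k-2) + E (k-1))^(k-2) := h5
        _ ≤ C * (E (k-2) + E (k-1))^(k-2) :=
            mul_le_mul_of_nonneg_right (le_max_left _ _) (by positivity)
    · -- a ≤ b
      have he1a : E 1 ≤ B1 * E (k-2) := by
        have h6 : E (k-2)^(k-2) ≤ E (k-2) * E (k-1)^(k-3) := by
          have hq : E (k-2)^(k-2) = E (k-2) * E (k-2)^(k-3) := by
            rw [← pow_succ']
            congr 1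
            omega
          rw [hq]
          exact mul_le_mul_of_nonneg_left (pow_le_pow_left₀ ha.le hab _) ha.le
        have h7 : E 1 * E (k-1)^(k-3) ≤ (B1 * E (k-2)) * E (k-1)^(k-3) := by
          calc E 1 * E (k-1)^(k-3) ≤ B1 * E (k-2)^(k-2) := P2
            _ ≤ B1 * (E (k-2) * E (k-1)^(k-3)) := mul_le_mul_of_nonneg_left h6 hB1pos.le
            _ = (B1 * E (k-2)) * E (k-1)^(k-3) := by ring
        exact le_of_mul_le_mul_right h7 (pow_pos hb _)
      have hδa : δ ≤ E (k-2) := by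
        have hble : E (k-1) ≤ B1^2 * E (k-2)^2 := by
          calc E (k-1) ≤ B1 * E 1 * E (k-2) := P1
            _ ≤ B1 * (B1 * E (k-2)) * E (k-2) :=
              mul_le_mul_of_nonneg_right (mul_le_mul_of_nonneg_left he1a hB1pos.le) ha.le
            _ = B1^2 * E (k-2)^2 := by ring
        have hN2 : N₀ ≤ D2 * (E (k-2)^3 + E (k-2)^2) := by
          have h8 : N₀ * E (k-2) ≤ (D2 * (E (k-2)^3 + E (k-2)^2)) * E (k-2) := by
            have hbb : E (k-1) * E (k-1) ≤ (B1^2*E (k-2)^2) * (B1^2*E (k-2)^2) :=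
              mul_le_mul hble hble hb.le (by positivity)
            have t1 := mul_le_mul_of_nonneg_left hbb hBpos.le
            have t2 := mul_le_mul_of_nonneg_right hble (mul_pos hα ha).le
            have p1 : (0:ℝ) ≤ B*B1^4*E (k-2)^3 := by positivity
            have p2 : (0:ℝ) ≤ α*B1^2*E (k-2)^4 := by positivity
            have e : (D2*(E (k-2)^3+E (k-2)^2))*E (k-2)
                = B*B1^4*E (k-2)^4 + B*B1^4*E (k-2)^3
                  + α*B1^2*E (k-2)^4 + α*B1^2*E (k-2)^3 := by
              rw [hD2def]; ring
            linarith [C1, t1, t2, p1, p2, e.le, e.ge]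
          exact le_of_mul_le_mul_right h8 ha
        rcases le_total 1 (E (k-2)) with h1a | h1a
        · exact le_trans hδ1 h1a
        · have ha3 : E (k-2)^3 ≤ E (k-2)^2 := by
            nlinarith [mul_nonneg (mul_pos ha ha).le (sub_nonneg.2 h1a)]
          have h9 : N₀ / (2*D2) ≤ E (k-2)^2 := by
            rw [div_le_iff₀ (by linarith)]
            have := mul_le_mul_of_nonneg_left ha3 hD2pos.le
            linarith [hN2, this]
          calc δ ≤ Real.sqrt (N₀/(2*D2)) := min_le_right _ _
            _ ≤ Real.sqrt (E (k-2)^2) := Real.sqrt_le_sqrt h9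
            _ = E (k-2) := Real.sqrt_sq ha.le
      have hδS : δ ≤ E (k-2) + E (k-1) := le_trans hδa haS
      have h10 : E 1 * δ^(k-3) ≤ B1 * (E (k-2) + E (k-1))^(k-2) := by
        have hSk : (E (k-2) + E (k-1))^(k-2)
            = (E (k-2) + E (k-1)) * (E (k-2) + E (k-1))^(k-3) := by
          rw [← pow_succ']
          congr 1
          omega
        calc E 1 * δ^(k-3) ≤ (B1 * E (k-2)) * δ^(k-3) :=
              mul_le_mul_of_nonneg_right he1a (by positivity)
          _ ≤ (B1 * (E (k-2) + E (k-1))) * (E (k-2) + E (k-1))^(k-3) := by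
              have hp1 : δ^(k-3) ≤ (E (k-2) + E (k-1))^(k-3) :=
                pow_le_pow_left₀ hδpos.le hδS _
              exact mul_le_mul (mul_le_mul_of_nonneg_left haS hB1pos.le) hp1
                (by positivity) (by positivity)
          _ = B1 * (E (k-2) + E (k-1))^(k-2) := by rw [hSk]; ring
      have h11 : E 1 ≤ (B1 / δ^(k-3)) * (E (k-2) + E (k-1))^(k-2) := by
        rw [div_mul_eq_mul_div, le_div_iff₀ (pow_pos hδpos _)]
        linarith [h10]
      calc E 1 ≤ (B1 / δ^(k-3)) * (E (k-2) + E (k-1))^(k-2) := h11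
        _ ≤ C * (E (k-2) + E (k-1))^(k-2) :=
            mul_le_mul_of_nonneg_right (le_max_right _ _) (by positivity)
  -- the identity
  have hSD : ∀ p : Fin n, SD α (k:ℤ) lam p
      = (∑ T ∈ ((Finset.univ.erase p).powersetCard (k-1)), ∏ i ∈ T, lam i)
        + α * (∑ T ∈ ((Finset.univ.erase p).powersetCard (k-2)), ∏ i ∈ T, lam i) := by
    intro p
    unfold SD sigmaOn
    rw [if_pos (by omega : (0:ℤ) ≤ (k:ℤ)-1), if_pos (by omega : (0:ℤ) ≤ (k:ℤ)-2),
      (by omega : ((k:ℤ)-1).toNat = k-1), (by omega : ((k:ℤ)-2).toNat = k-2)]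
  have hbr1 : esymmR ((k:ℤ)-1) lam = ∑ T ∈ Finset.univ.powersetCard (k-1), ∏ i ∈ T, lam i := by
    rw [hz1, hbridge (k-1)]
    exact Finset.esymm_map_val lam Finset.univ (k-1)
  have hbr2 : esymmR ((k:ℤ)-2) lam = ∑ T ∈ Finset.univ.powersetCard (k-2), ∏ i ∈ T, lam i := by
    rw [hz2, hbridge (k-2)]
    exact Finset.esymm_map_val lam Finset.univ (k-2)
  have hid : (∑ i, SD α (k : ℤ) lam i)
      = ((n - k + 1 : ℕ) : ℝ) * esymmR ((k : ℤ) - 1) lam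
        + α * ((n - k + 2 : ℕ) : ℝ) * esymmR ((k : ℤ) - 2) lam := by
    have hSD' : (∑ i, SD α (k : ℤ) lam i)
        = (∑ p : Fin n, ∑ T ∈ ((Finset.univ.erase p).powersetCard (k-1)), ∏ i ∈ T, lam i)
          + α * (∑ p : Fin n, ∑ T ∈ ((Finset.univ.erase p).powersetCard (k-2)), ∏ i ∈ T, lam i) := by
      rw [Finset.sum_congr rfl (fun p _ => hSD p), Finset.sum_add_distrib, ← Finset.mul_sum]
    rw [hSD', sum_sigma_erase lam (k-1), sum_sigma_erase lam (k-2), hbr1, hbr2,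
      (by omega : n-(k-1) = n-k+1), (by omega : n-(k-2) = n-k+2)]
    ring
  refine ⟨hid, ?_⟩
  -- lower bound on the sum
  have hEbr1 : esymmR ((k:ℤ)-1) lam = E (k-1) := by rw [hz1, hbridge (k-1)]
  have hEbr2 : esymmR ((k:ℤ)-2) lam = E (k-2) := by rw [hz2, hbridge (k-2)]
  have hlow : min 1 α * (E (k-2) + E (k-1)) ≤ ∑ i, SD α (k:ℤ) lam i := by
    rw [hid, hEbr1, hEbr2]
    have hco1 : (1:ℝ) ≤ ((n-k+1:ℕ):ℝ) := by exact_mod_cast (show 1 ≤ n-k+1 by omega)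
    have hco2 : (1:ℝ) ≤ ((n-k+2:ℕ):ℝ) := by exact_mod_cast (show 1 ≤ n-k+2 by omega)
    have hm1 : min 1 α ≤ 1 := min_le_left _ _
    have hm2 : min 1 α ≤ α := min_le_right _ _
    have g1 : min 1 α * E (k-1) ≤ 1 * E (k-1) := mul_le_mul_of_nonneg_right hm1 hb.le
    have g2 : (1:ℝ) * E (k-1) ≤ ((n-k+1:ℕ):ℝ) * E (k-1) :=
      mul_le_mul_of_nonneg_right hco1 hb.le
    have g3 : min 1 α * E (k-2) ≤ α * E (k-2) := mul_le_mul_of_nonneg_right hm2 ha.le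
    have g4 : α * ((1:ℝ) * E (k-2)) ≤ α * (((n-k+2:ℕ):ℝ) * E (k-2)) :=
      mul_le_mul_of_nonneg_left (mul_le_mul_of_nonneg_right hco2 ha.le) hα.le
    linarith only [g1, g2, g3, g4]
  -- rpow finish
  have hbr1' : esymmR 1 lam = E 1 := by
    rw [(by norm_num : (1:ℤ) = ((1:ℕ):ℤ)), hbridge 1]
  rw [hbr1']
  have hrp : E 1 ^ t ≤ (C * (E (k-2) + E (k-1))^(k-2)) ^ t :=
    Real.rpow_le_rpow he1.le hkey htpos.le
  have hsplit : (C * (E (k-2) + E (k-1))^(k-2)) ^ t = C^t * (E (k-2) + E (k-1)) := by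
    rw [Real.mul_rpow hCpos.le (by positivity)]
    congr 1
    rw [← Real.rpow_natCast (E (k-2) + E (k-1)) (k-2), ← Real.rpow_mul hSpos.le]
    have hcast : (((k-2:ℕ)):ℝ) * t = 1 := by
      have hc2 : (((k-2:ℕ)):ℝ) = (k:ℝ) - 2 := by
        have := Nat.cast_sub (show 2 ≤ k by omega) (R := ℝ)
        simpa using this
      rw [hc2, htdef]
      field_simp
    rw [hcast, Real.rpow_one]
  calc (min 1 α / C^t) * E 1 ^ t
      ≤ (min 1 α / C^t) * (C^t * (E (k-2)+E (k-1))) := by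
        refine mul_le_mul_of_nonneg_left ?_ (by positivity)
        rw [← hsplit]
        exact hrp
    _ = min 1 α * (E (k-2)+E (k-1)) := by field_simp
    _ ≤ ∑ i, SD α (k:ℤ) lam i := hlow
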